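/- The coexistence equilibrium of the Wolbachia system requires N♯ > W♯: if there exists an equilibrium (N,W) with N > 0 and W > 0, then (ρ_N − α_N)/β_N > (ρ_W − α_W)/β_W, assuming ρ_N > α_N and ρ_W > α_W. -/
import Mathlib

theorem stmt_17 (ρN ρW αN αW βN βW : ℝ)
    (hρN : 0 < ρN) (hρW : 0 < ρW) (hαN : 0 < αN) (hαW : 0 < αW)
    (hβN : 0 < βN) (hβW : 0 < βW)
    (hsN : αN < ρN) (hsW : αW < ρW)
    (h : ∃ N W : ℝ, 0 < N ∧ 0 < W ∧
      ρN * N^2 / (N + W) - αN * N - βN * N * (N + W) = 0 ∧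
      ρW * W - αW * W - βW * W * (N + W) = 0) :
    (ρW - αW) / βW < (ρN - αN) / βN := by
  obtain ⟨N, W, hN, hW, hF, hG⟩ := h
  have hS : 0 < N + W := by linarith
  have hG' : ρW - αW - βW * (N + W) = 0 := by
    have h0 : W * (ρW - αW - βW * (N + W)) = 0 := by ring_nf; ring_nf at hG; linarith
    rcases mul_eq_zero.mp h0 with h | h
    · linarith
    · exact h
  have hF' : ρN * N ^ 2 = (αN * N + βN * N * (N + W)) * (N + W) := by
    have := hS.ne'
    field_simp at hF
    linarith
  have hkey : αN + βN * (N + W) < ρN := by nlinarith [mul_pos hN hS, mul_pos hρN hW, mul_pos (mul_pos hρN hN) hW]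
  rw [div_lt_div_iff₀ hβW hβN]
  nlinarith
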